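/- For every x ∈ (0, 1), KL(1−x, x) ≥ log(1/(2.4 x)), where KL(p,q) denotes the Bernoulli KL divergence. -/
import Mathlib

/-- If `2.7182818283 ^ p * q ^ m ≥ 1` then `log q ≥ -(p/m)`. -/
lemma aux_log_lb (q : ℝ) (p m : ℕ) (hq : 0 < q) (hm : 0 < m)
    (h : (1:ℝ) ≤ 2.7182818283 ^ p * q ^ m) : -((p:ℝ)/(m:ℝ)) ≤ Real.log q := by
  have he : (2.7182818283:ℝ) ^ p ≤ Real.exp 1 ^ p :=
    pow_le_pow_left₀ (by norm_num) Real.exp_one_gt_d9.le p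
  have hexp : Real.exp 1 ^ p = Real.exp ((p:ℝ)/(m:ℝ)) ^ m := by
    rw [← Real.exp_nat_mul, ← Real.exp_nat_mul]
    congr 1
    field_simp
  have h2 : (1:ℝ) ≤ (Real.exp ((p:ℝ)/(m:ℝ)) * q) ^ m := by
    rw [mul_pow]
    calc (1:ℝ) ≤ 2.7182818283 ^ p * q ^ m := h
      _ ≤ Real.exp 1 ^ p * q ^ m := by
          apply mul_le_mul_of_nonneg_right he (by positivity)
      _ = Real.exp ((p:ℝ)/(m:ℝ)) ^ m * q ^ m := by rw [hexp]
  have h3 : (1:ℝ) ≤ Real.exp ((p:ℝ)/(m:ℝ)) * q := by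
    have := le_of_pow_le_pow_left₀ hm.ne' (by positivity) (by
      simpa using h2 : (1:ℝ) ^ m ≤ (Real.exp ((p:ℝ)/(m:ℝ)) * q) ^ m)
    simpa using this
  have h4 : Real.exp (-((p:ℝ)/(m:ℝ))) ≤ q := by
    rw [Real.exp_neg]
    have hep : 0 < Real.exp ((p:ℝ)/(m:ℝ)) := Real.exp_pos _
    rw [inv_le_iff_one_le_mul₀ hep]
    linarith [h3, mul_comm q (Real.exp ((p:ℝ)/(m:ℝ)))]
  exact (Real.le_log_iff_exp_le hq).2 h4

/-- Tangent-line lower bound for `log`, cleared of denominators. -/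
lemma aux_tangent (y c lc : ℝ) (hy : 0 < y) (hc : 0 < c) (hlc : lc ≤ Real.log c) :
    (lc + 1) * y - c ≤ y * Real.log y := by
  have h := Real.log_le_sub_one_of_pos (show 0 < c / y by positivity)
  rw [Real.log_div hc.ne' hy.ne'] at h
  have h2 : Real.log y ≥ lc + 1 - c / y := by linarith
  have h3 : y * (lc + 1 - c / y) ≤ y * Real.log y :=
    mul_le_mul_of_nonneg_left h2 hy.le
  have h4 : y * (c / y) = c := by field_simp
  nlinarith

/-- `log 2.4 ≥ 7/8`. -/
lemma aux_log_24 : (7:ℝ)/8 ≤ Real.log 2.4 := by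
  rw [Real.le_log_iff_exp_le (by norm_num)]
  have h : Real.exp ((7:ℝ)/8) ^ 8 ≤ (2.4:ℝ) ^ 8 := by
    rw [← Real.exp_nat_mul]
    have h7 : ((8:ℕ):ℝ) * (7/8) = 7 := by norm_num
    rw [h7]
    calc Real.exp 7 = Real.exp 1 ^ 7 := by
          rw [← Real.exp_nat_mul]; norm_num
      _ ≤ 2.7182818286 ^ 7 :=
          pow_le_pow_left₀ (Real.exp_pos 1).le Real.exp_one_lt_d9.le 7
      _ ≤ 2.4 ^ 8 := by norm_num
  exact le_of_pow_le_pow_left₀ (by norm_num) (by norm_num) h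

set_option maxHeartbeats 1600000 in
/-- For `x ∈ (0,1)`, `KL(1−x, x) ≥ log(1/(2.4 x))` for the Bernoulli KL
divergence. -/
theorem bernoulli_kl_lower_bound (x : ℝ) (hx : x ∈ Set.Ioo (0 : ℝ) 1) :
    Real.log (1 / (2.4 * x)) ≤
      (1 - x) * Real.log ((1 - x) / x) + x * Real.log (x / (1 - x)) := by
  obtain ⟨hx0, hx1⟩ := hx
  have h1x : (0:ℝ) < 1 - x := by linarith
  rw [Real.log_div one_ne_zero (by positivity), Real.log_mul (by norm_num) hx0.ne',
    Real.log_div h1x.ne' hx0.ne', Real.log_div hx0.ne' h1x.ne', Real.log_one]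
  set L1 := Real.log (1 - x) with hL1
  set L2 := Real.log x with hL2
  have hB : (7:ℝ)/8 ≤ Real.log 2.4 := aux_log_24
  have key : 0 ≤ (1 - 2*x) * L1 + 2*x*L2 + 7/8 := by
    rcases le_total x (1/5) with hr | hr
    · -- region 1 : tangent points q = 9/10, a = 1/10
      have hlq : -((5:ℝ)/47) ≤ Real.log (9/10) := by
        have := aux_log_lb (9/10) 5 47 (by norm_num) (by norm_num) (by norm_num)
        norm_num at this ⊢
        linarith
      have hla : -((76:ℝ)/33) ≤ Real.log (1/10) := by
        have := aux_log_lb (1/10) 76 33 (by norm_num) (by norm_num) (by norm_num)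
        norm_num at this ⊢
        linarith
      have h1 : (-(5/47) + 1) * (1-x) - 9/10 ≤ (1-x) * L1 :=
        aux_tangent (1-x) (9/10) (-(5/47)) h1x (by norm_num) hlq
      have h2 : (-(76/33) + 1) * x - 1/10 ≤ x * L2 :=
        aux_tangent x (1/10) (-(76/33)) hx0 (by norm_num) hla
      have hm1 : (1-2*x) * ((-(5/47) + 1) * (1-x) - 9/10) ≤ (1-2*x) * ((1-x) * L1) :=
        mul_le_mul_of_nonneg_left h1 (by linarith)
      have hm2 : (2*(1-x)) * ((-(76/33) + 1) * x - 1/10) ≤ (2*(1-x)) * (x * L2) :=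
        mul_le_mul_of_nonneg_left h2 (by linarith)
      have hprod : (1-x) * 0 ≤ (1-x) * ((1 - 2*x) * L1 + 2*x*L2 + 7/8) := by
        nlinarith [hm1, hm2, hx0.le, hr, mul_nonneg hx0.le hx0.le,
          mul_nonneg (mul_nonneg hx0.le hx0.le) hx0.le,
          mul_nonneg hx0.le (by linarith : (0:ℝ) ≤ 1/5 - x)]
      exact le_of_mul_le_mul_left hprod h1x
    · rcases le_total x (1/2) with hr2 | hr2
      · -- region 2 : tangent points q = 17/25, a = 8/25
        have hlq : -((17:ℝ)/44) ≤ Real.log (17/25) := by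
          have := aux_log_lb (17/25) 17 44 (by norm_num) (by norm_num) (by norm_num)
          norm_num at this ⊢
          linarith
        have hla : -((57:ℝ)/50) ≤ Real.log (8/25) := by
          have := aux_log_lb (8/25) 57 50 (by norm_num) (by norm_num) (by norm_num)
          norm_num at this ⊢
          linarith
        have h1 : (-(17/44) + 1) * (1-x) - 17/25 ≤ (1-x) * L1 :=
          aux_tangent (1-x) (17/25) (-(17/44)) h1x (by norm_num) hlq
        have h2 : (-(57/50) + 1) * x - 8/25 ≤ x * L2 :=
          aux_tangent x (8/25) (-(57/50)) hx0 (by norm_num) hla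
        have hm1 : (1-2*x) * ((-(17/44) + 1) * (1-x) - 17/25) ≤ (1-2*x) * ((1-x) * L1) :=
          mul_le_mul_of_nonneg_left h1 (by linarith)
        have hm2 : (2*(1-x)) * ((-(57/50) + 1) * x - 8/25) ≤ (2*(1-x)) * (x * L2) :=
          mul_le_mul_of_nonneg_left h2 (by linarith)
        have hprod : (1-x) * 0 ≤ (1-x) * ((1 - 2*x) * L1 + 2*x*L2 + 7/8) := by
          nlinarith [hm1, hm2, hr, hr2,
            mul_nonneg (mul_nonneg (by linarith : (0:ℝ) ≤ x - 1/5) (by linarith : (0:ℝ) ≤ 1/2 - x)) (by linarith : (0:ℝ) ≤ 1/2 - x),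
            mul_nonneg (sq_nonneg (x - 33/100)) (by linarith : (0:ℝ) ≤ 1/2 - x),
            mul_nonneg (sq_nonneg (x - 33/100)) (by linarith : (0:ℝ) ≤ x - 1/5)]
        exact le_of_mul_le_mul_left hprod h1x
      · -- region 3 : x ≥ 1/2
        have hla : -((25:ℝ)/36) ≤ Real.log (1/2) := by
          have := aux_log_lb (1/2) 25 36 (by norm_num) (by norm_num) (by norm_num)
          norm_num at this ⊢
          linarith
        have h2 : (-(25/36) + 1) * x - 1/2 ≤ x * L2 :=
          aux_tangent x (1/2) (-(25/36)) hx0 (by norm_num) hla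
        have hL1neg : L1 ≤ 0 := Real.log_nonpos (by linarith) (by linarith)
        have hpos : 0 ≤ (1 - 2*x) * L1 := by
          nlinarith [mul_nonneg (by linarith : (0:ℝ) ≤ 2*x - 1) (by linarith : (0:ℝ) ≤ -L1)]
        nlinarith [h2, hr2, hpos]
  nlinarith [key, hB]
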